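/- Let n, r be natural numbers, A : Matrix (Fin n) (Fin n) ℝ, and y ∈ ℝ. Then the function U : Matrix (Fin n) (Fin r) ℝ ↦ |y − trace(Aᵀ * (U * Uᵀ))| + ‖A‖₂ · ‖U‖_F² is convex, where ‖A‖₂ denotes the L2 operator (spectral) norm of A and ‖U‖_F the Frobenius norm of U. Equivalently, the robust matrix sensing component function U ↦ |y − ⟨A, U Uᵀ⟩| is τ-weakly convex with parameter τ = 2‖A‖₂ with respect to the Frobenius inner product. -/

import Mathlib

open Matrix

/-- The robust matrix sensing component U ↦ |y − ⟨A, UUᵀ⟩| is weakly convex with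
parameter 2‖A‖₂ (spectral norm) with respect to the Frobenius inner product;
here ‖U‖_F² = ∑ᵢⱼ Uᵢⱼ². -/
theorem robust_matrix_sensing_weaklyConvex
    (n r : ℕ) (A : Matrix (Fin n) (Fin n) ℝ) (y : ℝ) :
    ConvexOn ℝ Set.univ (fun U : Matrix (Fin n) (Fin r) ℝ =>
      |y - Matrix.trace (Aᵀ * (U * Uᵀ))| +
        ‖Matrix.toEuclideanCLM (𝕜 := ℝ) A‖ * ∑ i, ∑ j, (U i j) ^ 2) := by
  set c := ‖Matrix.toEuclideanCLM (𝕜 := ℝ) A‖ with hc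
  have hc0 : (0:ℝ) ≤ c := norm_nonneg _
  -- Key inequality: |⟨A, WWᵀ⟩| ≤ c ‖W‖_F².
  have key : ∀ W : Matrix (Fin n) (Fin r) ℝ,
      |Matrix.trace (Aᵀ * (W * Wᵀ))| ≤ c * ∑ i, ∑ j, (W i j) ^ 2 := by
    intro W
    have htr : Matrix.trace (Aᵀ * (W * Wᵀ)) =
        ∑ k, inner ℝ ((Matrix.toEuclideanCLM (𝕜 := ℝ) A) ((WithLp.equiv 2 _).symm (fun p => W p k)))
          ((WithLp.equiv 2 ((_ : Fin n) → ℝ)).symm (fun p => W p k)) := by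
      simp only [WithLp.equiv_symm_apply, Matrix.toEuclideanCLM_toLp, PiLp.inner_apply,
        PiLp.toLp_apply, Matrix.toLin'_apply, Matrix.mulVec, dotProduct,
        RCLike.inner_apply, conj_trivial, Matrix.trace, Matrix.diag, Matrix.mul_apply,
        Matrix.transpose_apply, Finset.sum_mul, Finset.mul_sum]
      calc ∑ q : Fin n, ∑ p : Fin n, ∑ k : Fin r, A p q * (W p k * W q k)
          = ∑ q : Fin n, ∑ k : Fin r, ∑ p : Fin n, A p q * (W p k * W q k) :=
            Finset.sum_congr rfl fun q _ => Finset.sum_comm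
        _ = ∑ k : Fin r, ∑ q : Fin n, ∑ p : Fin n, A p q * (W p k * W q k) := Finset.sum_comm
        _ = ∑ k : Fin r, ∑ p : Fin n, ∑ q : Fin n, A p q * W q k * W p k := by
            refine Finset.sum_congr rfl fun k _ => ?_
            calc ∑ q : Fin n, ∑ p : Fin n, A p q * (W p k * W q k)
                = ∑ p : Fin n, ∑ q : Fin n, A p q * (W p k * W q k) := Finset.sum_comm
              _ = ∑ p : Fin n, ∑ q : Fin n, A p q * W q k * W p k :=
                  Finset.sum_congr rfl fun p _ => Finset.sum_congr rfl fun q _ => by ring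
        _ = ∑ k : Fin r, ∑ p : Fin n, ∑ q : Fin n, W p k * (A p q * W q k) :=
            Finset.sum_congr rfl fun k _ => Finset.sum_congr rfl fun p _ =>
              Finset.sum_congr rfl fun q _ => by ring
    rw [htr]
    set w : Fin r → EuclideanSpace ℝ (Fin n) :=
      fun k => (WithLp.equiv 2 ((_ : Fin n) → ℝ)).symm (fun p => W p k) with hw
    calc |∑ k, (inner ℝ ((Matrix.toEuclideanCLM (𝕜 := ℝ) A) (w k)) (w k) : ℝ)|
        ≤ ∑ k, |(inner ℝ ((Matrix.toEuclideanCLM (𝕜 := ℝ) A) (w k)) (w k) : ℝ)| :=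
          Finset.abs_sum_le_sum_abs _ _
      _ ≤ ∑ k, c * ∑ p, (W p k) ^ 2 := by
          refine Finset.sum_le_sum fun k _ => ?_
          have h1 : |(inner ℝ ((Matrix.toEuclideanCLM (𝕜 := ℝ) A) (w k)) (w k) : ℝ)| ≤
              ‖(Matrix.toEuclideanCLM (𝕜 := ℝ) A) (w k)‖ * ‖w k‖ := abs_real_inner_le_norm _ _
          have h2 : ‖(Matrix.toEuclideanCLM (𝕜 := ℝ) A) (w k)‖ ≤ c * ‖w k‖ :=
            (Matrix.toEuclideanCLM (𝕜 := ℝ) A).le_opNorm _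
          have h3 : ‖w k‖ * ‖w k‖ = ∑ p, (W p k) ^ 2 := by
            rw [← real_inner_self_eq_norm_mul_norm]
            simp only [hw, WithLp.equiv_symm_apply, PiLp.inner_apply, PiLp.toLp_apply,
              RCLike.inner_apply, conj_trivial, sq]
          have h4 : ‖(Matrix.toEuclideanCLM (𝕜 := ℝ) A) (w k)‖ * ‖w k‖ ≤ (c * ‖w k‖) * ‖w k‖ :=
            mul_le_mul_of_nonneg_right h2 (norm_nonneg _)
          calc |(inner ℝ ((Matrix.toEuclideanCLM (𝕜 := ℝ) A) (w k)) (w k) : ℝ)|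
              ≤ (c * ‖w k‖) * ‖w k‖ := h1.trans h4
            _ = c * (‖w k‖ * ‖w k‖) := by ring
            _ = c * ∑ p, (W p k) ^ 2 := by rw [h3]
      _ = c * ∑ i, ∑ j, (W i j) ^ 2 := by rw [← Finset.mul_sum, Finset.sum_comm]
  refine ⟨convex_univ, ?_⟩
  rintro U - V - a b ha hb hab
  simp only [smul_eq_mul]
  -- abbreviations
  set fU := Matrix.trace (Aᵀ * (U * Uᵀ)) with hfU
  set fV := Matrix.trace (Aᵀ * (V * Vᵀ)) with hfV
  set D := Matrix.trace (Aᵀ * ((U - V) * (U - V)ᵀ)) with hD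
  set gU := ∑ i, ∑ j, (U i j) ^ 2 with hgU
  set gV := ∑ i, ∑ j, (V i j) ^ 2 with hgV
  set gW := ∑ i, ∑ j, ((U - V) i j) ^ 2 with hgW
  have hfe : Matrix.trace (Aᵀ * ((a • U + b • V) * (a • U + b • V)ᵀ)) =
      a * fU + b * fV - a * b * D := by
    simp only [hfU, hfV, hD, Matrix.add_mul, Matrix.mul_add, Matrix.sub_mul, Matrix.mul_sub,
      Matrix.transpose_add, Matrix.transpose_sub, Matrix.transpose_smul, Matrix.smul_mul,
      Matrix.mul_smul, Matrix.trace_add, Matrix.trace_sub, Matrix.trace_smul, smul_eq_mul]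
    linear_combination (a * Matrix.trace (Aᵀ * (U * Uᵀ)) + b * Matrix.trace (Aᵀ * (V * Vᵀ))) * hab
  have hge : (∑ i, ∑ j, ((a • U + b • V) i j) ^ 2) = a * gU + b * gV - a * b * gW := by
    have hij : ∀ i j, ((a • U + b • V) i j) ^ 2 =
        a * (U i j) ^ 2 + b * (V i j) ^ 2 - a * b * ((U - V) i j) ^ 2 := by
      intro i j
      simp only [Matrix.add_apply, Matrix.smul_apply, Matrix.sub_apply, smul_eq_mul]
      linear_combination (a * (U i j) ^ 2 + b * (V i j) ^ 2) * hab
    simp only [hij, hgU, hgV, hgW, Finset.sum_sub_distrib, Finset.sum_add_distrib,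
      ← Finset.mul_sum]
  rw [hfe, hge]
  have habs : |y - (a * fU + b * fV - a * b * D)| ≤
      a * |y - fU| + b * |y - fV| + a * b * |D| := by
    have hsplit : y - (a * fU + b * fV - a * b * D) =
        a * (y - fU) + b * (y - fV) + a * b * D := by linear_combination (-y) * hab
    rw [hsplit]
    calc |a * (y - fU) + b * (y - fV) + a * b * D|
        ≤ |a * (y - fU) + b * (y - fV)| + |a * b * D| := abs_add_le _ _
      _ ≤ |a * (y - fU)| + |b * (y - fV)| + |a * b * D| := by
          have := abs_add_le (a * (y - fU)) (b * (y - fV)); linarith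
      _ = a * |y - fU| + b * |y - fV| + a * b * |D| := by
          rw [abs_mul, abs_mul, abs_mul, abs_of_nonneg ha, abs_of_nonneg hb,
            abs_of_nonneg (mul_nonneg ha hb)]
  have hDle : |D| ≤ c * gW := key (U - V)
  have hab0 : (0:ℝ) ≤ a * b := mul_nonneg ha hb
  nlinarith [mul_le_mul_of_nonneg_left hDle hab0]
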